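/- Let c : (0,∞) → (0,∞) be regularly varying with index γ < -1. Then ∫_t^∞ c(s) ds < ∞ for large t and lim_{t→∞} t·c(t)/∫_t^∞ c(s) ds = -γ - 1. -/

import Mathlib

open Filter MeasureTheory Set
open scoped ENNReal


lemma preimage_translate_null {N : Set ℝ} (hN : volume N = 0) (a : ℝ) :
    volume ((fun x => a + x) ⁻¹' N) = 0 := by
  obtain ⟨N', hsub, hmeas, hN'⟩ := exists_measurable_superset_of_null hN
  refine measure_mono_null (preimage_mono hsub) ?_
  rw [measure_preimage_add volume a N', hN']

lemma uct_aux (g g' : ℝ → ℝ) (hg'm : Measurable g')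
    (hae : volume {x : ℝ | g' x ≠ g x} = 0)
    (hconv : ∀ v : ℝ, Tendsto (fun u => g (u + v) - g u) atTop (nhds 0))
    {ε : ℝ} (hε : 0 < ε) :
    ∃ U : ℝ, ∀ u ≥ U, ∀ v ∈ Set.Icc (0:ℝ) 1, |g (u + v) - g u| ≤ ε := by
  by_contra hcon
  push_neg at hcon
  have hsel : ∀ n : ℕ, ∃ u ≥ (n : ℝ), ∃ v ∈ Set.Icc (0:ℝ) 1, ε < |g (u + v) - g u| := fun n => hcon n
  choose u hu v hv hfail using hsel
  have hu_top : Tendsto u atTop atTop :=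
    tendsto_atTop_mono hu tendsto_natCast_atTop_atTop
  have huv_top : Tendsto (fun n => u n + v n) atTop atTop :=
    tendsto_atTop_mono (fun n => le_add_of_nonneg_right (hv n).1) hu_top
  -- the two families of "good" sets
  set V : ℕ → Set ℝ := fun n =>
    Icc 0 2 ∩ ⋂ (m : ℕ) (_ : n ≤ m), {x : ℝ | |g' (u m + x) - g (u m)| ≤ ε/2} with hV
  set W : ℕ → Set ℝ := fun n =>
    Icc 0 2 ∩ ⋂ (m : ℕ) (_ : n ≤ m), {x : ℝ | |g' (u m + v m + x) - g (u m + v m)| ≤ ε/2} with hW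
  have hmeas : ∀ (b : ℕ → ℝ) n, MeasurableSet
      (Icc (0:ℝ) 2 ∩ ⋂ (m : ℕ) (_ : n ≤ m), {x : ℝ | |g' (b m + x) - g (b m)| ≤ ε/2}) := by
    intro b n
    refine measurableSet_Icc.inter (MeasurableSet.iInter fun m => MeasurableSet.iInter fun _ => ?_)
    exact measurableSet_le (((hg'm.comp (measurable_const_add (b m))).sub measurable_const).abs)
      measurable_const
  -- the generic claim: for a family of base points tending to infinity, some set has big measure
  have key : ∀ b : ℕ → ℝ, Tendsto b atTop atTop →
      ∃ n : ℕ, (3/2 : ℝ≥0∞) < volume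
        (Icc (0:ℝ) 2 ∩ ⋂ (m : ℕ) (_ : n ≤ m), {x : ℝ | |g' (b m + x) - g (b m)| ≤ ε/2}) := by
    intro b hb
    set S : ℕ → Set ℝ := fun n =>
      Icc (0:ℝ) 2 ∩ ⋂ (m : ℕ) (_ : n ≤ m), {x : ℝ | |g' (b m + x) - g (b m)| ≤ ε/2} with hS
    have hmono : Monotone S := by
      intro i j hij
      refine inter_subset_inter_right _ ?_
      intro x hx
      simp only [mem_iInter] at hx ⊢
      exact fun m hm => hx m (hij.trans hm)
    have hBad : volume (⋃ m : ℕ, (fun x => b m + x) ⁻¹' {x : ℝ | g' x ≠ g x}) = 0 :=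
      measure_iUnion_null fun m => preimage_translate_null hae (b m)
    have hcover : Icc (0:ℝ) 2 \ (⋃ m : ℕ, (fun x => b m + x) ⁻¹' {x : ℝ | g' x ≠ g x})
        ⊆ ⋃ n, S n := by
      intro x hx
      obtain ⟨hx1, hx2⟩ := hx
      have heq : ∀ m, g' (b m + x) = g (b m + x) := by
        intro m
        by_contra hne
        exact hx2 (mem_iUnion.mpr ⟨m, hne⟩)
      have : Tendsto (fun m => g (b m + x) - g (b m)) atTop (nhds 0) := by
        have := (hconv x).comp hb
        exact this
      have hev : ∀ᶠ m in atTop, |g (b m + x) - g (b m)| ≤ ε/2 := by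
        have := this.abs
        simp only [abs_zero] at this
        exact this.eventually_le_const (by linarith)
      obtain ⟨n, hn⟩ := hev.exists_forall_of_atTop
      refine mem_iUnion.mpr ⟨n, hx1, ?_⟩
      simp only [mem_iInter, mem_setOf_eq]
      intro m hm
      rw [heq m]
      exact hn m hm
    have h2 : (2 : ℝ≥0∞) ≤ volume (⋃ n, S n) := by
      have : volume (Icc (0:ℝ) 2) ≤ volume (⋃ n, S n) := by
        calc volume (Icc (0:ℝ) 2)
            ≤ volume (Icc (0:ℝ) 2 \ (⋃ m : ℕ, (fun x => b m + x) ⁻¹' {x : ℝ | g' x ≠ g x}))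
              + volume (⋃ m : ℕ, (fun x => b m + x) ⁻¹' {x : ℝ | g' x ≠ g x}) :=
              (measure_mono (subset_diff_union _ _)).trans (measure_union_le _ _)
          _ ≤ volume (⋃ n, S n) + 0 := by
              rw [hBad]; exact add_le_add_left (measure_mono hcover) 0
          _ = volume (⋃ n, S n) := by rw [add_zero]
      calc (2 : ℝ≥0∞) = volume (Icc (0:ℝ) 2) := by
            rw [Real.volume_Icc]; norm_num
        _ ≤ _ := this
    have := tendsto_measure_iUnion_atTop (μ := volume) hmono
    have hev := this.eventually_const_lt (lt_of_lt_of_le (by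
      rw [ENNReal.div_lt_iff (by norm_num) (by norm_num)]; norm_num : (3/2:ℝ≥0∞) < 2) h2)
    exact hev.exists
  obtain ⟨n₁, hn₁⟩ := key u hu_top
  obtain ⟨n₂, hn₂⟩ := key (fun n => u n + v n) huv_top
  set m := max n₁ n₂ with hm
  set A := V n₁ with hA
  set B := (fun x => x - v m) ⁻¹' (W n₂) with hB
  have hBvol : volume B = volume (W n₂) := by
    rw [hB]
    have : (fun x : ℝ => x - v m) = (fun x : ℝ => -v m + x) := by funext x; ring
    rw [this]
    exact measure_preimage_add volume _ _
  have hsubAB : A ∪ B ⊆ Icc 0 3 := by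
    rintro x (hx | hx)
    · have := hx.1
      exact ⟨this.1, this.2.trans (by norm_num)⟩
    · have hxW : x - v m ∈ Icc (0:ℝ) 2 := hx.1
      have h1 := (hv m).1; have h2 := (hv m).2
      exact ⟨by linarith [hxW.1], by linarith [hxW.2]⟩
  have hAB : (A ∩ B).Nonempty := by
    apply nonempty_of_measure_ne_zero (μ := volume)
    show volume (A ∩ B) ≠ 0
    intro h0
    have hsum := measure_union_add_inter (μ := volume) (t := B) A
      ((hmeas _ n₂).preimage (measurable_id.sub measurable_const))
    rw [h0, add_zero] at hsum
    have hlt : (3 : ℝ≥0∞) < volume A + volume B := by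
      rw [hBvol]
      calc (3 : ℝ≥0∞) = 3/2 + 3/2 := by norm_num
        _ < volume A + volume (W n₂) := ENNReal.add_lt_add hn₁ hn₂
    rw [← hsum] at hlt
    have hle : volume (A ∪ B) ≤ 3 := by
      calc volume (A ∪ B) ≤ volume (Icc (0:ℝ) 3) := measure_mono hsubAB
        _ = 3 := by rw [Real.volume_Icc]; norm_num
    exact absurd hlt (not_lt.mpr hle)
  obtain ⟨s, hsA, hsB⟩ := hAB
  have h1 : |g' (u m + s) - g (u m)| ≤ ε/2 := by
    have := hsA.2
    simp only [mem_iInter, mem_setOf_eq] at this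
    exact this m (le_max_left _ _)
  have h2 : |g' (u m + v m + (s - v m)) - g (u m + v m)| ≤ ε/2 := by
    have := hsB.2
    simp only [mem_iInter, mem_setOf_eq] at this
    exact this m (le_max_right _ _)
  have harg : u m + v m + (s - v m) = u m + s := by ring
  rw [harg] at h2
  have : |g (u m + v m) - g (u m)| ≤ ε := by
    have := abs_sub (g' (u m + s) - g (u m)) (g' (u m + s) - g (u m + v m))
    calc |g (u m + v m) - g (u m)|
        = |(g' (u m + s) - g (u m)) - (g' (u m + s) - g (u m + v m))| := by ring_nf
      _ ≤ |g' (u m + s) - g (u m)| + |g' (u m + s) - g (u m + v m)| := abs_sub _ _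
      _ ≤ ε/2 + ε/2 := add_le_add h1 h2
      _ = ε := by ring
  exact absurd (hfail m) (not_lt.mpr this)

-- a null subset of (0,∞) has null preimage under exp
lemma exp_preimage_null {N : Set ℝ} (hN : N ⊆ Ioi 0) (h0 : volume N = 0) :
    volume (Real.exp ⁻¹' N) = 0 := by
  have himg : Real.exp ⁻¹' N = Real.log '' N := by
    ext u
    constructor
    · intro hu
      exact ⟨Real.exp u, hu, Real.log_exp u⟩
    · rintro ⟨x, hx, rfl⟩
      simpa [Real.exp_log (hN hx)] using hx
  rw [himg]
  refine addHaar_image_eq_zero_of_differentiableOn_of_addHaar_eq_zero volume ?_ h0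
  intro x hx
  exact (Real.differentiableAt_log (ne_of_gt (hN hx))).differentiableWithinAt

-- a null subset of (0,∞) has null preimage under (t * ·) for t > 0
lemma mul_preimage_null {N : Set ℝ} (h0 : volume N = 0) {t : ℝ} (ht : 0 < t) :
    volume ((fun x => t * x) ⁻¹' N) = 0 := by
  have himg : (fun x => t * x) ⁻¹' N = (fun y => y / t) '' N := by
    ext x
    simp only [mem_preimage, mem_image]
    constructor
    · intro hx; exact ⟨t * x, hx, by field_simp⟩
    · rintro ⟨y, hy, rfl⟩; rwa [mul_div_cancel₀ _ (ne_of_gt ht)]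
  rw [himg]
  refine addHaar_image_eq_zero_of_differentiableOn_of_addHaar_eq_zero volume ?_ h0
  exact (differentiable_id.div_const t).differentiableOn

lemma bad_set_null (c : ℝ → ℝ) (hloc : LocallyIntegrableOn c (Set.Ioi 0)) :
    ∃ cm : ℝ → ℝ, Measurable cm ∧
      volume ({s : ℝ | c s ≠ cm s} ∩ Ioi 0) = 0 := by
  have ham : AEStronglyMeasurable c (volume.restrict (Ioi 0)) := hloc.aestronglyMeasurable
  refine ⟨ham.mk c, ham.stronglyMeasurable_mk.measurable, ?_⟩
  have := ham.ae_eq_mk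
  rw [Filter.EventuallyEq, ae_iff] at this
  rw [Measure.restrict_apply' measurableSet_Ioi] at this
  exact this

lemma uct_mult (c : ℝ → ℝ) (γ : ℝ) (hγ : γ < -1)
    (hpos : ∀ t : ℝ, 0 < t → 0 < c t)
    (hrv : ∀ x : ℝ, 0 < x → Tendsto (fun t => c (t * x) / c t) atTop (nhds (x ^ γ)))
    (hloc : LocallyIntegrableOn c (Set.Ioi 0)) {ε : ℝ} (hε : 0 < ε) :
    ∃ T : ℝ, 1 ≤ T ∧ ∀ t ≥ T, ∀ x ∈ Set.Icc (1:ℝ) 2, |c (t * x) / c t - x ^ γ| ≤ ε := by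
  obtain ⟨cm, hcm_meas, hcm_null⟩ := bad_set_null c hloc
  set N := {s : ℝ | c s ≠ cm s} ∩ Ioi 0 with hN
  set g : ℝ → ℝ := fun u => Real.log (c (Real.exp u)) - γ * u with hg
  set g' : ℝ → ℝ := fun u => Real.log (cm (Real.exp u)) - γ * u with hg'
  have hg'm : Measurable g' :=
    ((Real.measurable_log.comp (hcm_meas.comp Real.measurable_exp)).sub
      (measurable_const.mul measurable_id))
  have hae : volume {x : ℝ | g' x ≠ g x} = 0 := by
    refine measure_mono_null ?_ (exp_preimage_null inter_subset_right hcm_null)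
    intro u hu
    simp only [mem_setOf_eq, hg, hg'] at hu ⊢
    refine ⟨?_, Real.exp_pos u⟩
    intro heq
    exact hu (by rw [heq])
  have hconv : ∀ v : ℝ, Tendsto (fun u => g (u + v) - g u) atTop (nhds 0) := by
    intro v
    set x := Real.exp v with hx
    have hx0 : 0 < x := Real.exp_pos v
    have h1 : Tendsto (fun t => Real.log (c (t * x) / c t)) atTop
        (nhds (Real.log (x ^ γ))) :=
      ((Real.continuousAt_log (ne_of_gt (Real.rpow_pos_of_pos hx0 γ))).tendsto).comp (hrv x hx0)
    have h2 : Real.log (x ^ γ) = γ * v := by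
      rw [Real.log_rpow hx0, hx, Real.log_exp]
    rw [h2] at h1
    have h3 : Tendsto (fun u => Real.log (c (Real.exp u * x) / c (Real.exp u))) atTop
        (nhds (γ * v)) := h1.comp Real.tendsto_exp_atTop
    have h4 : Tendsto (fun u => Real.log (c (Real.exp u * x) / c (Real.exp u)) - γ * v)
        atTop (nhds 0) := by
      simpa using h3.sub (tendsto_const_nhds (x := γ * v))
    refine h4.congr' ?_ |>.mono_right le_rfl
    filter_upwards [eventually_gt_atTop (0:ℝ)] with u hu
    have hc1 : c (Real.exp u * x) ≠ 0 := ne_of_gt (hpos _ (mul_pos (Real.exp_pos u) hx0))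
    have hc2 : c (Real.exp u) ≠ 0 := ne_of_gt (hpos _ (Real.exp_pos u))
    rw [Real.log_div hc1 hc2]
    simp only [hg, Real.exp_add, hx]
    ring
  set ε' := Real.log (1 + ε) with hε'
  have hε'0 : 0 < ε' := Real.log_pos (by linarith)
  obtain ⟨U, hU⟩ := uct_aux g g' hg'm hae hconv hε'0
  refine ⟨max 1 (Real.exp U), le_max_left _ _, ?_⟩
  intro t ht x hx
  have ht0 : (0:ℝ) < t := lt_of_lt_of_le one_pos (le_trans (le_max_left _ _) ht)
  have hx0 : (0:ℝ) < x := lt_of_lt_of_le one_pos hx.1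
  have hu : Real.log t ≥ U := by
    have : Real.exp U ≤ t := le_trans (le_max_right _ _) ht
    rwa [← Real.le_log_iff_exp_le ht0] at this
  have hv : Real.log x ∈ Set.Icc (0:ℝ) 1 := by
    constructor
    · exact Real.log_nonneg hx.1
    · calc Real.log x ≤ x - 1 := Real.log_le_sub_one_of_pos hx0
        _ ≤ 1 := by linarith [hx.2]
  have key := hU (Real.log t) hu (Real.log x) hv
  have harg : Real.exp (Real.log t + Real.log x) = t * x := by
    rw [Real.exp_add, Real.exp_log ht0, Real.exp_log hx0]
  have harg2 : Real.exp (Real.log t) = t := Real.exp_log ht0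
  simp only [hg, harg, harg2] at key
  -- key : |log (c (t*x)) - γ*(log t + log x) - (log (c t) - γ * log t)| ≤ ε'
  set δ := Real.log (c (t * x)) - Real.log (c t) - γ * Real.log x with hδ
  have hδ_le : |δ| ≤ ε' := by
    have : Real.log (c (t * x)) - γ * (Real.log t + Real.log x)
        - (Real.log (c t) - γ * Real.log t) = δ := by rw [hδ]; ring
    rwa [this] at key
  have hctx : 0 < c (t * x) := hpos _ (mul_pos ht0 hx0)
  have hct : 0 < c t := hpos _ ht0
  have hratio : c (t * x) / c t = x ^ γ * Real.exp δ := by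
    rw [hδ]
    rw [← Real.exp_log (div_pos hctx hct), Real.log_div (ne_of_gt hctx) (ne_of_gt hct)]
    rw [Real.rpow_def_of_pos hx0, ← Real.exp_add]
    congr 1
    ring
  rw [hratio]
  have hxγ1 : x ^ γ ≤ 1 :=
    Real.rpow_le_one_of_one_le_of_nonpos hx.1 (by linarith)
  have hxγ0 : 0 < x ^ γ := Real.rpow_pos_of_pos hx0 γ
  have habs : |Real.exp δ - 1| ≤ Real.exp |δ| - 1 := by
    rw [abs_le]
    constructor
    · have h1 : Real.exp (-|δ|) ≤ Real.exp δ := Real.exp_le_exp.mpr (neg_abs_le δ)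
      have h2 : Real.exp (-|δ|) = (Real.exp |δ|)⁻¹ := Real.exp_neg _
      have h3 : (1:ℝ) ≤ Real.exp |δ| := Real.one_le_exp (abs_nonneg δ)
      have h4 : (Real.exp |δ|)⁻¹ ≥ 2 - Real.exp |δ| := by
        have hpos' : (0:ℝ) < Real.exp |δ| := Real.exp_pos _
        rw [ge_iff_le, ← sub_nonneg]
        have : (Real.exp |δ|)⁻¹ - (2 - Real.exp |δ|)
            = (Real.exp |δ| - 1)^2 / Real.exp |δ| := by field_simp; ring
        rw [this]
        positivity
      nlinarith [h1, h2.symm ▸ h4]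
    · have := Real.exp_le_exp.mpr (le_abs_self δ)
      linarith
  have hexp_le : Real.exp |δ| ≤ 1 + ε := by
    calc Real.exp |δ| ≤ Real.exp ε' := Real.exp_le_exp.mpr hδ_le
      _ = 1 + ε := Real.exp_log (by linarith)
  calc |x ^ γ * Real.exp δ - x ^ γ| = x ^ γ * |Real.exp δ - 1| := by
        rw [show x ^ γ * Real.exp δ - x ^ γ = x ^ γ * (Real.exp δ - 1) by ring,
          abs_mul, abs_of_pos hxγ0]
    _ ≤ 1 * (Real.exp |δ| - 1) := by
        apply mul_le_mul hxγ1 habs (abs_nonneg _) zero_le_one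
    _ ≤ ε := by linarith

set_option maxHeartbeats 1000000 in
lemma potter (c : ℝ → ℝ) (γ : ℝ) (hγ : γ < -1)
    (hpos : ∀ t : ℝ, 0 < t → 0 < c t)
    (hrv : ∀ x : ℝ, 0 < x → Tendsto (fun t => c (t * x) / c t) atTop (nhds (x ^ γ)))
    (hloc : LocallyIntegrableOn c (Set.Ioi 0)) :
    ∃ T C α : ℝ, 1 ≤ T ∧ 0 < C ∧ α < -1 ∧
      ∀ t ≥ T, ∀ x ≥ (1:ℝ), c (t * x) ≤ C * c t * x ^ α := by
  have h2γ : (2:ℝ) ^ (γ + 1) < 1 :=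
    Real.rpow_lt_one_of_one_lt_of_neg one_lt_two (by linarith)
  have h2γ0 : (0:ℝ) < 2 ^ (γ + 1) := Real.rpow_pos_of_pos two_pos _
  set ε₁ : ℝ := (1 - 2 ^ (γ + 1)) / 4 with hε₁
  have hε₁0 : 0 < ε₁ := by rw [hε₁]; linarith
  set q : ℝ := 2 ^ γ + ε₁ with hq
  have h2γγ : (2:ℝ) ^ (γ + 1) = 2 * 2 ^ γ := by
    rw [Real.rpow_add two_pos, Real.rpow_one]; ring
  have hq0 : 0 < q := by
    have := Real.rpow_pos_of_pos two_pos γ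
    rw [hq]; linarith
  have hqhalf : q < 1/2 := by
    rw [hq, hε₁]
    nlinarith [h2γγ]
  obtain ⟨T, hT1, hT⟩ := uct_mult c γ hγ hpos hrv hloc hε₁0
  have hT0 : (0:ℝ) < T := lt_of_lt_of_le one_pos hT1
  -- one step bound on [1,2]
  have step : ∀ t ≥ T, ∀ x ∈ Set.Icc (1:ℝ) 2, c (t * x) ≤ (x ^ γ + ε₁) * c t := by
    intro t ht x hx
    have hct : 0 < c t := hpos t (lt_of_lt_of_le hT0 ht)
    have := (abs_le.mp (hT t ht x hx)).2
    have hdiv : c (t * x) / c t ≤ x ^ γ + ε₁ := by linarith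
    calc c (t * x) = (c (t * x) / c t) * c t := by field_simp
      _ ≤ (x ^ γ + ε₁) * c t := by
          apply mul_le_mul_of_nonneg_right hdiv hct.le
  -- iterate at x = 2
  have hq2 : ∀ t ≥ T, c (t * 2) ≤ q * c t := by
    intro t ht
    have := step t ht 2 ⟨one_le_two, le_refl 2⟩
    rwa [hq]
  have iter : ∀ k : ℕ, ∀ t ≥ T, c (t * 2 ^ k) ≤ q ^ k * c t := by
    intro k
    induction k with
    | zero => intro t ht; simp
    | succ k ih =>
      intro t ht
      have ht0 : 0 < t := lt_of_lt_of_le hT0 ht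
      have htk : t * 2 ^ k ≥ T := by
        calc T ≤ t := ht
          _ ≤ t * 2 ^ k := le_mul_of_one_le_right ht0.le (one_le_pow₀ one_le_two)
      have h1 := hq2 (t * 2 ^ k) htk
      have h2 := ih t ht
      have harg : t * 2 ^ (k + 1) = t * 2 ^ k * 2 := by ring
      rw [harg, pow_succ]
      calc c (t * 2 ^ k * 2) ≤ q * c (t * 2 ^ k) := h1
        _ ≤ q * (q ^ k * c t) := by
            apply mul_le_mul_of_nonneg_left h2 hq0.le
        _ = q ^ k * q * c t := by ring
  set α : ℝ := Real.logb 2 q with hα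
  have hα1 : α < -1 := by
    rw [hα]
    have h1 : Real.logb 2 q < Real.logb 2 (1/2) :=
      Real.logb_lt_logb one_lt_two hq0 hqhalf
    have h2 : Real.logb 2 (1/2) = -1 := by
      rw [show (1:ℝ)/2 = (2:ℝ) ^ (-1:ℝ) by rw [Real.rpow_neg_one]; norm_num]
      exact Real.logb_rpow two_pos (by norm_num)
    linarith
  have h2α : (2:ℝ) ^ α = q := Real.rpow_logb two_pos (by norm_num) hq0
  refine ⟨T, (1 + ε₁) * 2 ^ (-α), α, hT1, by positivity, hα1, ?_⟩
  intro t ht x hx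
  have ht0 : 0 < t := lt_of_lt_of_le hT0 ht
  have hx0 : (0:ℝ) < x := lt_of_lt_of_le one_pos hx
  have hct : 0 < c t := hpos t ht0
  set k : ℕ := ⌊Real.logb 2 x⌋₊ with hk
  have hlogb0 : 0 ≤ Real.logb 2 x := Real.logb_nonneg one_lt_two hx
  have hk_le : (k : ℝ) ≤ Real.logb 2 x := by rw [hk]; exact Nat.floor_le hlogb0
  have hk_gt : Real.logb 2 x < (k : ℝ) + 1 := by
    have := Nat.lt_floor_add_one (Real.logb 2 x)
    rw [hk]; push_cast; push_cast at this; linarith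
  have h2k_le : (2:ℝ) ^ (k:ℕ) ≤ x := by
    have : (2:ℝ) ^ ((k:ℝ)) ≤ 2 ^ (Real.logb 2 x) := by
      exact Real.rpow_le_rpow_left_iff one_lt_two |>.mpr hk_le
    rwa [Real.rpow_natCast, Real.rpow_logb two_pos (by norm_num) hx0] at this
  have h2k_gt : x < (2:ℝ) ^ (k:ℕ) * 2 := by
    have : (2:ℝ) ^ (Real.logb 2 x) < 2 ^ ((k:ℝ) + 1) := by
      exact (Real.rpow_lt_rpow_left_iff one_lt_two).mpr hk_gt
    rw [Real.rpow_logb two_pos (by norm_num) hx0, Real.rpow_add two_pos,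
      Real.rpow_natCast, Real.rpow_one] at this
    exact this
  have h2k0 : (0:ℝ) < 2 ^ (k:ℕ) := by positivity
  set r : ℝ := x / 2 ^ (k:ℕ) with hr
  have hr1 : 1 ≤ r := (one_le_div h2k0).mpr h2k_le
  have hr2 : r ≤ 2 := by
    rw [hr, div_le_iff₀ h2k0]
    linarith [h2k_gt]
  have htk : t * 2 ^ (k:ℕ) ≥ T :=
    le_trans ht (le_mul_of_one_le_right ht0.le (one_le_pow₀ one_le_two))
  have hsplit : t * x = t * 2 ^ (k:ℕ) * r := by
    rw [hr]; field_simp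
  have hstep := step (t * 2 ^ (k:ℕ)) htk r ⟨hr1, hr2⟩
  have hrγ : r ^ γ ≤ 1 := Real.rpow_le_one_of_one_le_of_nonpos hr1 (by linarith)
  have hck : 0 < c (t * 2 ^ (k:ℕ)) := hpos _ (by positivity)
  have hbound1 : c (t * x) ≤ (1 + ε₁) * c (t * 2 ^ (k:ℕ)) := by
    rw [hsplit]
    calc c (t * 2 ^ (k:ℕ) * r) ≤ (r ^ γ + ε₁) * c (t * 2 ^ (k:ℕ)) := hstep
      _ ≤ (1 + ε₁) * c (t * 2 ^ (k:ℕ)) := by nlinarith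
  have hbound2 : c (t * 2 ^ (k:ℕ)) ≤ q ^ (k:ℕ) * c t := iter k t ht
  have hqk : q ^ (k:ℕ) ≤ 2 ^ (-α) * x ^ α := by
    have e1 : q ^ (k:ℕ) = ((2:ℝ) ^ (k:ℕ)) ^ α := by
      rw [← h2α, ← Real.rpow_natCast (2 ^ α) k, ← Real.rpow_natCast 2 k,
        ← Real.rpow_mul two_pos.le, ← Real.rpow_mul two_pos.le, mul_comm]
    have e2 : ((2:ℝ) ^ (k:ℕ)) ^ α ≤ (x / 2) ^ α := by
      apply Real.rpow_le_rpow_of_nonpos (by linarith) (by linarith [h2k_gt]) (by linarith)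
    have e3 : ((x:ℝ) / 2) ^ α = x ^ α / 2 ^ α := Real.div_rpow hx0.le (by norm_num : (0:ℝ) ≤ 2) α
    have e4 : x ^ α / 2 ^ α = 2 ^ (-α) * x ^ α := by
      rw [Real.rpow_neg two_pos.le]
      field_simp
    rw [e1]
    calc ((2:ℝ) ^ (k:ℕ)) ^ α ≤ (x / 2) ^ α := e2
      _ = 2 ^ (-α) * x ^ α := by rw [e3, e4]
  calc c (t * x) ≤ (1 + ε₁) * c (t * 2 ^ (k:ℕ)) := hbound1
    _ ≤ (1 + ε₁) * (q ^ (k:ℕ) * c t) := by nlinarith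
    _ ≤ (1 + ε₁) * (2 ^ (-α) * x ^ α * c t) := by
        have h2negα : (0:ℝ) < 2 ^ (-α) := Real.rpow_pos_of_pos two_pos _
        have := mul_le_mul_of_nonneg_right hqk hct.le
        nlinarith
    _ = (1 + ε₁) * 2 ^ (-α) * c t * x ^ α := by ring

theorem karamata_direct_below (c : ℝ → ℝ) (γ : ℝ) (hγ : γ < -1)
    (hpos : ∀ t : ℝ, 0 < t → 0 < c t)
    (hrv : ∀ x : ℝ, 0 < x → Tendsto (fun t => c (t * x) / c t) atTop (nhds (x ^ γ)))
    (hloc : LocallyIntegrableOn c (Set.Ioi 0)) :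
    (∀ᶠ t in atTop, IntegrableOn c (Set.Ioi t)) ∧
    Tendsto (fun t => t * c t / ∫ s in Set.Ioi t, c s) atTop (nhds (-γ - 1)) := by
  obtain ⟨T, C, α, hT1, hC0, hα1, hbound⟩ := potter c γ hγ hpos hrv hloc
  obtain ⟨cm, hcm_meas, hcm_null⟩ := bad_set_null c hloc
  have hT0 : (0:ℝ) < T := lt_of_lt_of_le one_pos hT1
  -- integrability for t ≥ T
  have hint : ∀ t ≥ T, IntegrableOn c (Set.Ioi t) := by
    intro t ht
    have ht0 : (0:ℝ) < t := lt_of_lt_of_le hT0 ht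
    have hct : 0 < c t := hpos t ht0
    have htα : (0:ℝ) < t ^ α := Real.rpow_pos_of_pos ht0 α
    have hmeas : AEStronglyMeasurable c (volume.restrict (Set.Ioi t)) := by
      refine hloc.aestronglyMeasurable.mono_measure (Measure.restrict_mono ?_ le_rfl)
      exact Ioi_subset_Ioi ht0.le
    have hgint : IntegrableOn (fun s => (C * c t / t ^ α) * s ^ α) (Set.Ioi t) :=
      (integrableOn_Ioi_rpow_of_lt hα1 ht0).const_mul _
    refine Integrable.mono' hgint hmeas ?_
    filter_upwards [ae_restrict_mem measurableSet_Ioi] with s hs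
    have hst : t < s := hs
    have hs0 : 0 < s := ht0.trans hst
    have hx1 : (1:ℝ) ≤ s / t := (one_le_div ht0).mpr hst.le
    have harg : t * (s / t) = s := by field_simp
    have hb := hbound t ht (s / t) hx1
    rw [harg] at hb
    have hdivrpow : (s / t) ^ α = s ^ α / t ^ α := Real.div_rpow hs0.le ht0.le α
    rw [Real.norm_eq_abs, abs_of_pos (hpos s hs0)]
    calc c s ≤ C * c t * ((s / t) ^ α) := hb
      _ = (C * c t / t ^ α) * s ^ α := by rw [hdivrpow]; ring
  constructor
  · filter_upwards [eventually_ge_atTop T] with t ht using hint t ht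
  -- the limit
  have hL0 : (0:ℝ) < -γ - 1 := by linarith
  -- dominated convergence for F t = ∫_{Ioi 1} c(t x)/c t
  have hdc : Tendsto (fun t => ∫ x in Set.Ioi (1:ℝ), c (t * x) / c t) atTop
      (nhds (∫ x in Set.Ioi (1:ℝ), x ^ γ)) := by
    apply tendsto_integral_filter_of_dominated_convergence (fun x => C * x ^ α)
    · -- measurability
      filter_upwards [eventually_ge_atTop T] with t ht
      have ht0 : (0:ℝ) < t := lt_of_lt_of_le hT0 ht
      refine ⟨fun x => cm (t * x) / c t,
        ((hcm_meas.comp (measurable_const_mul t)).div_const _).stronglyMeasurable, ?_⟩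
      have hnull : volume ((fun x => t * x) ⁻¹' ({s : ℝ | c s ≠ cm s} ∩ Ioi 0)) = 0 :=
        mul_preimage_null hcm_null ht0
      rw [Filter.EventuallyEq, ae_restrict_iff' measurableSet_Ioi]
      rw [ae_iff]
      refine measure_mono_null ?_ hnull
      intro x hx
      simp only [mem_setOf_eq, not_forall] at hx
      obtain ⟨hx1, hne⟩ := hx
      have hx0 : (0:ℝ) < x := lt_trans one_pos hx1
      constructor
      · intro heq
        exact hne (by rw [heq])
      · exact mul_pos ht0 hx0
    · -- bound
      filter_upwards [eventually_ge_atTop T] with t ht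
      filter_upwards [ae_restrict_mem measurableSet_Ioi] with x hx
      have hx1 : (1:ℝ) < x := hx
      have ht0 : (0:ℝ) < t := lt_of_lt_of_le hT0 ht
      have hct : 0 < c t := hpos t ht0
      have hb := hbound t ht x hx1.le
      rw [Real.norm_eq_abs, abs_of_pos (div_pos (hpos _ (mul_pos ht0 (lt_trans one_pos hx1))) hct)]
      rw [div_le_iff₀ hct]
      calc c (t * x) ≤ C * c t * x ^ α := hb
        _ = C * x ^ α * c t := by ring
    · exact (integrableOn_Ioi_rpow_of_lt hα1 one_pos).const_mul C
    · filter_upwards [ae_restrict_mem measurableSet_Ioi] with x hx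
      exact hrv x (lt_trans one_pos hx)
  have hval : (∫ x in Set.Ioi (1:ℝ), x ^ γ) = 1 / (-γ - 1) := by
    rw [integral_Ioi_rpow_of_lt hγ one_pos]
    rw [Real.one_rpow]
    rw [div_eq_div_iff (by linarith : γ + 1 ≠ 0) (by linarith : -γ - 1 ≠ 0)]
    ring
  rw [hval] at hdc
  -- identify F with the ratio
  have hFeq : ∀ᶠ t in atTop, (∫ x in Set.Ioi (1:ℝ), c (t * x) / c t)
      = (∫ s in Set.Ioi t, c s) / (t * c t) := by
    filter_upwards [eventually_ge_atTop T] with t ht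
    have ht0 : (0:ℝ) < t := lt_of_lt_of_le hT0 ht
    have hct : 0 < c t := hpos t ht0
    have h1 : (∫ x in Set.Ioi (1:ℝ), c (t * x)) = t⁻¹ • ∫ s in Set.Ioi (t * 1), c s :=
      integral_comp_mul_left_Ioi c 1 ht0
    rw [mul_one] at h1
    rw [integral_div, h1]
    simp only [smul_eq_mul]
    rw [inv_mul_eq_div, div_div]
  have hF : Tendsto (fun t => (∫ s in Set.Ioi t, c s) / (t * c t)) atTop
      (nhds (1 / (-γ - 1))) := hdc.congr' hFeq
  have hne : (1:ℝ) / (-γ - 1) ≠ 0 := by positivity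
  have := hF.inv₀ hne
  rw [show ((1:ℝ) / (-γ - 1))⁻¹ = -γ - 1 by field_simp] at this
  refine this.congr fun t => ?_
  exact inv_div _ _
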